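/- Assume (A2), (A4) and (A5). Let σ, τ ∈ 𝒮* be words whose concatenation σ∗τ belongs to 𝒮*, and let s > 0. Then (p̲·s̲^r·χ̄^{−1})^s·ℰ_r(σ)^s·ℰ_r(τ)^s ≤ ℰ_r(σ∗τ)^s ≤ (p̄·s̄^r·χ̲^{−1})^s·ℰ_r(σ)^s·ℰ_r(τ)^s, where p̲ = min_{(i,j)∈G₂}p_{i,j}, p̄ = max_{(i,j)∈G₂}p_{i,j}, s̲ = min_{(i,j)∈𝒮₂}s_{i,j}, s̄ = max_{(i,j)∈𝒮₂}s_{i,j}, χ̲ = min_{1≤i≤2N}χ_i, χ̄ = max_{1≤i≤2N}χ_i. -/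

import Mathlib

open scoped Classical ENNReal
open Filter MeasureTheory

noncomputable section

namespace MTM

/-- the edge relation of the directed graph `𝒢`: `(i,j) ∈ G₂ ↔ p i j > 0`. -/
def edge (p : ℕ → ℕ → ℝ) (i j : ℕ) : Prop := 0 < p i j

/-- product of transition weights along a word. -/
def pword (p : ℕ → ℕ → ℝ) : List ℕ → ℝ
  | [] => 1
  | [_] => 1
  | a :: b :: t => p a b * pword p (b :: t)

/-- product of contraction ratios along a word. -/
def sword (sr : ℕ → ℕ → ℝ) : List ℕ → ℝ
  | [] => 1
  | [_] => 1
  | a :: b :: t => sr a b * sword sr (b :: t)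

/-- `𝒯(σ)`: all lifts of a word, each letter `i` may be replaced by `i + N`. -/
def lifts (N : ℕ) : List ℕ → Finset (List ℕ)
  | [] => {[]}
  | i :: t => (lifts N t).biUnion fun l => {i :: l, (i + N) :: l}

/-- `Γ(σ) = G_n ∩ 𝒯(σ)`. -/
def Gam (p : ℕ → ℕ → ℝ) (N : ℕ) (σ : List ℕ) : Finset (List ℕ) :=
  (lifts N σ).filter fun τ => τ.Chain' (edge p)

/-- words over the alphabet `Ψ = {1,…,N}`. -/
def isPsiWord (N : ℕ) (σ : List ℕ) : Prop :=
  σ ≠ [] ∧ ∀ x ∈ σ, x ∈ Finset.Icc 1 N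

/-- `σ ∈ 𝒮_*`: a `Ψ`-word having at least one admissible lift. -/
def isSword (p : ℕ → ℕ → ℝ) (N : ℕ) (σ : List ℕ) : Prop :=
  isPsiWord N σ ∧ (Gam p N σ).Nonempty

/-- `σ ∈ G_*`: admissible words over `Ω = {1,…,2N}`. -/
def isGword (p : ℕ → ℕ → ℝ) (N : ℕ) (σ : List ℕ) : Prop :=
  σ ≠ [] ∧ (∀ x ∈ σ, x ∈ Finset.Icc 1 (2 * N)) ∧ σ.Chain' (edge p)

/-- `σ ∈ H₁^*`: admissible words with all letters in `Ψ`. -/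
def isH1word (p : ℕ → ℕ → ℝ) (N : ℕ) (σ : List ℕ) : Prop :=
  σ ≠ [] ∧ (∀ x ∈ σ, x ∈ Finset.Icc 1 N) ∧ σ.Chain' (edge p)

/-- `σ ∈ H₂^*`: admissible words with all letters in `Υ = {N+1,…,2N}`. -/
def isH2word (p : ℕ → ℕ → ℝ) (N : ℕ) (σ : List ℕ) : Prop :=
  σ ≠ [] ∧ (∀ x ∈ σ, x ∈ Finset.Icc (N + 1) (2 * N)) ∧ σ.Chain' (edge p)

/-- `μ(J_σ) = Σ_{σ̃ ∈ Γ(σ)} χ_{σ̃₁} p_{σ̃}`. -/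
def muJ (p : ℕ → ℕ → ℝ) (χ : ℕ → ℝ) (N : ℕ) (σ : List ℕ) : ℝ :=
  ∑ τ ∈ Gam p N σ, χ (τ.headD 0) * pword p τ

/-- `ℰ_r(σ) = μ(J_σ) s_σ^r`, with `ℰ_r(θ) = 1` for the empty word. -/
def Er (p : ℕ → ℕ → ℝ) (χ : ℕ → ℝ) (sr : ℕ → ℕ → ℝ) (N : ℕ) (r : ℝ) (σ : List ℕ) : ℝ :=
  if σ = [] then 1 else muJ p χ N σ * sword sr σ ^ r

/-- `I_{1,σ}` resp. `I_{2,σ}`: the part of `μ(J_σ)` coming from lifts ending with `i`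
(resp. with `i⁺`, when applied with `i + N`). -/
def Ipart (p : ℕ → ℕ → ℝ) (χ : ℕ → ℝ) (N : ℕ) (i : ℕ) (σ : List ℕ) : ℝ :=
  ∑ τ ∈ (Gam p N σ).filter (fun τ => τ.getLastD 0 = i), χ (τ.headD 0) * pword p τ

/-- all words of a given length over a finite alphabet. -/
def wordsOfLen (S : Finset ℕ) : ℕ → Finset (List ℕ)
  | 0 => {[]}
  | n + 1 => (wordsOfLen S n).biUnion fun l => S.image fun a => a :: l

/-- `𝒮_n` as a finite set of words. -/
def Sn (p : ℕ → ℕ → ℝ) (N n : ℕ) : Finset (List ℕ) :=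
  (wordsOfLen (Finset.Icc 1 N) n).filter (isSword p N)

/-- irreducibility of the sub-matrix of `p` indexed by `S`: the corresponding directed
graph is strongly connected. -/
def irreducibleOn (p : ℕ → ℕ → ℝ) (S : Finset ℕ) : Prop :=
  ∀ i ∈ S, ∀ j ∈ S, ∃ c : List ℕ, (∀ x ∈ c, x ∈ S) ∧ List.Chain (edge p) i (c ++ [j])

/-- Assumption (A1): `P₁, P₂` irreducible and `P₄ = 0`. -/
def A1 (p : ℕ → ℕ → ℝ) (N : ℕ) : Prop :=
  irreducibleOn p (Finset.Icc 1 N) ∧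
    irreducibleOn (fun a b => p (a + N) (b + N)) (Finset.Icc 1 N) ∧
    ∀ i ∈ Finset.Icc 1 N, ∀ j ∈ Finset.Icc 1 N, p (i + N) j = 0

/-- Assumption (A2). -/
def A2 (p : ℕ → ℕ → ℝ) (N : ℕ) : Prop :=
  ∀ i ∈ Finset.Icc 1 N,
    2 ≤ ((Finset.Icc 1 N).filter fun j => 0 < p i j).card ∧
      2 ≤ ((Finset.Icc 1 N).filter fun j => 0 < p (i + N) (j + N)).card

/-- Assumption (A3): `ℳ_{i,j} = ∅` or `ℳ_{i,j} = {(i,j),(i,j⁺),(i⁺,j⁺)}`. -/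
def A3 (p : ℕ → ℕ → ℝ) (N : ℕ) : Prop :=
  ∀ i ∈ Finset.Icc 1 N, ∀ j ∈ Finset.Icc 1 N,
    (p i j = 0 ∧ p i (j + N) = 0 ∧ p (i + N) j = 0 ∧ p (i + N) (j + N) = 0) ∨
      (0 < p i j ∧ 0 < p i (j + N) ∧ p (i + N) j = 0 ∧ 0 < p (i + N) (j + N))

/-- Assumption (A4): `ℳ_{i,j} = ∅` or `ℳ_{i,j} = 𝒩_{i,j}`. -/
def A4 (p : ℕ → ℕ → ℝ) (N : ℕ) : Prop :=
  ∀ i ∈ Finset.Icc 1 N, ∀ j ∈ Finset.Icc 1 N,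
    (p i j = 0 ∧ p i (j + N) = 0 ∧ p (i + N) j = 0 ∧ p (i + N) (j + N) = 0) ∨
      (0 < p i j ∧ 0 < p i (j + N) ∧ 0 < p (i + N) j ∧ 0 < p (i + N) (j + N))

/-- Assumption (A5): `P₁` is irreducible. -/
def A5 (p : ℕ → ℕ → ℝ) (N : ℕ) : Prop := irreducibleOn p (Finset.Icc 1 N)

/-- `T_σ = T_{σ₁σ₂} ∘ ⋯ ∘ T_{σ_{n-1}σ_n}` (identity for words of length `≤ 1`). -/
def Tword {E : Type*} (T : ℕ → ℕ → E → E) : List ℕ → E → E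
  | [], x => x
  | [_], x => x
  | a :: b :: t, x => T a b (Tword T (b :: t) x)

/-- the cylinder set `J_σ = T_σ (J_{σ_n})`. -/
def Jword {E : Type*} (T : ℕ → ℕ → E → E) (J : ℕ → Set E) (σ : List ℕ) : Set E :=
  Tword T σ '' J (σ.getLastD 0)

/-- the Mauldin–Williams fractal `K = ⋂_k ⋃_{σ ∈ G_k} J_σ`. -/
def attractor {E : Type*} (p : ℕ → ℕ → ℝ) (N : ℕ) (T : ℕ → ℕ → E → E) (J : ℕ → Set E) :
    Set E :=
  ⋂ n : ℕ, ⋃ σ ∈ {σ : List ℕ | isGword p N σ ∧ σ.length = n + 1}, Jword T J σ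

/-- `μ` is reducible: `μ = ν₁ ∘ π₁⁻¹` for the Markov-type measure `ν₁` associated with some
`N × N` row-stochastic matrix and positive probability vector; equivalently, the cylinder
values of `μ` are of Markov type. -/
def reducible {E : Type*} [MeasurableSpace E] (p : ℕ → ℕ → ℝ) (N : ℕ)
    (T : ℕ → ℕ → E → E) (J : ℕ → Set E) (μ : Measure E) : Prop :=
  ∃ (pt : ℕ → ℕ → ℝ) (χt : ℕ → ℝ),
    (∀ i ∈ Finset.Icc 1 N, ∀ j ∈ Finset.Icc 1 N, 0 ≤ pt i j) ∧
      (∀ i ∈ Finset.Icc 1 N, ∑ j ∈ Finset.Icc 1 N, pt i j = 1) ∧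
      (∀ i ∈ Finset.Icc 1 N, 0 < χt i) ∧
      (∑ i ∈ Finset.Icc 1 N, χt i = 1) ∧
      ∀ σ : List ℕ, isSword p N σ →
        μ (Jword T J σ) = ENNReal.ofReal (χt (σ.headD 0) * pword pt σ)

/-- `e^r_{k,r}(μ)`: the `k`-th quantization error of order `r`, to the `r`-th power. -/
def quantErr {E : Type*} [PseudoMetricSpace E] [MeasurableSpace E] (r : ℝ) (μ : Measure E)
    (k : ℕ) : ℝ :=
  sInf ((fun α : Set E => ∫ x, Metric.infDist x α ^ r ∂μ) ''
    {α : Set E | α.Nonempty ∧ α.Finite ∧ α.ncard ≤ k})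

/-- the upper quantization coefficient `Q̄_r^s(μ) = limsup_k k^{r/s} e^r_{k,r}(μ)`. -/
def upperQC {E : Type*} [PseudoMetricSpace E] [MeasurableSpace E] (r s : ℝ)
    (μ : Measure E) : ℝ≥0∞ :=
  limsup (fun k : ℕ => ENNReal.ofReal ((k : ℝ) ^ (r / s) * quantErr r μ k)) atTop

/-- the lower quantization coefficient `Q̲_r^s(μ)`. -/
def lowerQC {E : Type*} [PseudoMetricSpace E] [MeasurableSpace E] (r s : ℝ)
    (μ : Measure E) : ℝ≥0∞ :=
  liminf (fun k : ℕ => ENNReal.ofReal ((k : ℝ) ^ (r / s) * quantErr r μ k)) atTop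

/-- the upper quantization dimension `D̄_r(μ) = limsup_k log k / (-log e_{k,r}(μ))`. -/
def upperQD {E : Type*} [PseudoMetricSpace E] [MeasurableSpace E] (r : ℝ)
    (μ : Measure E) : ℝ :=
  limsup (fun k : ℕ => Real.log k / (-Real.log (quantErr r μ k ^ (1 / r)))) atTop

/-- the lower quantization dimension `D̲_r(μ)`. -/
def lowerQD {E : Type*} [PseudoMetricSpace E] [MeasurableSpace E] (r : ℝ)
    (μ : Measure E) : ℝ :=
  liminf (fun k : ℕ => Real.log k / (-Real.log (quantErr r μ k ^ (1 / r)))) atTop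

/-- spectral radius of a real matrix: the largest modulus of a complex eigenvalue. -/
def specRad {n : Type*} [Fintype n] [DecidableEq n] (M : Matrix n n ℝ) : ℝ :=
  sSup (norm '' spectrum ℂ (M.map (algebraMap ℝ ℂ)))

/-- `A₁(s) = ((p_{i,j} s_{i,j}^r)^s)_{i,j=1}^N`. -/
def matA1 (p sr : ℕ → ℕ → ℝ) (N : ℕ) (r s : ℝ) : Matrix (Fin N) (Fin N) ℝ :=
  Matrix.of fun i j => (p (i.1 + 1) (j.1 + 1) * sr (i.1 + 1) (j.1 + 1) ^ r) ^ s

/-- `A₂(s) = ((p_{i⁺,j⁺} s_{i⁺,j⁺}^r)^s)_{i,j=1}^N`. -/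
def matA2 (p sr : ℕ → ℕ → ℝ) (N : ℕ) (r s : ℝ) : Matrix (Fin N) (Fin N) ℝ :=
  Matrix.of fun i j => (p (i.1 + 1 + N) (j.1 + 1 + N) * sr (i.1 + 1 + N) (j.1 + 1 + N) ^ r) ^ s

/-- `A₃(s) = ((p_{i,j⁺} s_{i,j⁺}^r)^s)_{i,j=1}^N`. -/
def matA3 (p sr : ℕ → ℕ → ℝ) (N : ℕ) (r s : ℝ) : Matrix (Fin N) (Fin N) ℝ :=
  Matrix.of fun i j => (p (i.1 + 1) (j.1 + 1 + N) * sr (i.1 + 1) (j.1 + 1 + N) ^ r) ^ s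

/-- `A₄(s) = ((p_{i⁺,j} s_{i⁺,j}^r)^s)_{i,j=1}^N`. -/
def matA4 (p sr : ℕ → ℕ → ℝ) (N : ℕ) (r s : ℝ) : Matrix (Fin N) (Fin N) ℝ :=
  Matrix.of fun i j => (p (i.1 + 1 + N) (j.1 + 1) * sr (i.1 + 1 + N) (j.1 + 1) ^ r) ^ s

/-- the block matrix `A(s) = [[A₁(s), A₃(s)], [A₄(s), A₂(s)]]`. -/
def matA (p sr : ℕ → ℕ → ℝ) (N : ℕ) (r s : ℝ) :
    Matrix (Fin N ⊕ Fin N) (Fin N ⊕ Fin N) ℝ :=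
  Matrix.fromBlocks (matA1 p sr N r s) (matA3 p sr N r s) (matA4 p sr N r s) (matA2 p sr N r s)

/-- `p̲ = min_{(i,j) ∈ G₂} p_{i,j}`. -/
def pMin (p : ℕ → ℕ → ℝ) (N : ℕ) : ℝ :=
  sInf {x | ∃ i ∈ Finset.Icc 1 (2 * N), ∃ j ∈ Finset.Icc 1 (2 * N), 0 < p i j ∧ x = p i j}

/-- `p̄ = max_{(i,j) ∈ G₂} p_{i,j}`. -/
def pMax (p : ℕ → ℕ → ℝ) (N : ℕ) : ℝ :=
  sSup {x | ∃ i ∈ Finset.Icc 1 (2 * N), ∃ j ∈ Finset.Icc 1 (2 * N), 0 < p i j ∧ x = p i j}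

/-- `s̲ = min_{(i,j) ∈ 𝒮₂} s_{i,j}`. -/
def sMin (p sr : ℕ → ℕ → ℝ) (N : ℕ) : ℝ :=
  sInf {x | ∃ i ∈ Finset.Icc 1 N, ∃ j ∈ Finset.Icc 1 N, isSword p N [i, j] ∧ x = sr i j}

/-- `s̄ = max_{(i,j) ∈ 𝒮₂} s_{i,j}`. -/
def sMax (p sr : ℕ → ℕ → ℝ) (N : ℕ) : ℝ :=
  sSup {x | ∃ i ∈ Finset.Icc 1 N, ∃ j ∈ Finset.Icc 1 N, isSword p N [i, j] ∧ x = sr i j}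

/-- `χ̲ = min_{1 ≤ i ≤ 2N} χ_i`. -/
def chiMin (χ : ℕ → ℝ) (N : ℕ) : ℝ := sInf {x | ∃ i ∈ Finset.Icc 1 (2 * N), x = χ i}

/-- `χ̄ = max_{1 ≤ i ≤ 2N} χ_i`. -/
def chiMax (χ : ℕ → ℝ) (N : ℕ) : ℝ := sSup {x | ∃ i ∈ Finset.Icc 1 (2 * N), x = χ i}

/-- `t` satisfies the defining property of `t_r`:
`(1/n) log Σ_{σ ∈ 𝒮_n} ℰ_r(σ)^{t/(t+r)} → 0`. -/
def trCond (p : ℕ → ℕ → ℝ) (χ : ℕ → ℝ) (sr : ℕ → ℕ → ℝ) (N : ℕ) (r t : ℝ) : Prop :=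
  0 < t ∧
    Tendsto (fun n : ℕ => (n : ℝ)⁻¹ *
      Real.log (∑ σ ∈ Sn p N n, Er p χ sr N r σ ^ (t / (t + r)))) atTop (nhds 0)

/-- the initial word of length `n` of an infinite sequence. -/
def seqTake (x : ℕ → ℕ) (n : ℕ) : List ℕ := (List.range n).map x

/-- `Γ` is a finite maximal antichain among the words satisfying `W`, with respect to the
infinite sequences satisfying `Wseq`. -/
def isMaxAntichain (W : List ℕ → Prop) (Wseq : (ℕ → ℕ) → Prop) (Γ : Finset (List ℕ)) : Prop :=
  (∀ σ ∈ Γ, W σ) ∧ (∀ σ ∈ Γ, ∀ τ ∈ Γ, σ ≠ τ → ¬σ <+: τ) ∧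
    ∀ x : ℕ → ℕ, Wseq x → ∃ n : ℕ, 1 ≤ n ∧ seqTake x n ∈ Γ

/-- infinite admissible sequences with letters in `Ψ`. -/
def isH1seq (p : ℕ → ℕ → ℝ) (N : ℕ) (x : ℕ → ℕ) : Prop :=
  (∀ n, x n ∈ Finset.Icc 1 N) ∧ ∀ n, 0 < p (x n) (x (n + 1))

/-- infinite admissible sequences with letters in `Υ`. -/
def isH2seq (p : ℕ → ℕ → ℝ) (N : ℕ) (x : ℕ → ℕ) : Prop :=
  (∀ n, x n ∈ Finset.Icc (N + 1) (2 * N)) ∧ ∀ n, 0 < p (x n) (x (n + 1))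

/-- minimal length of a word in `Γ`. -/
def minLen (Γ : Finset (List ℕ)) : ℕ := sInf {n | ∃ σ ∈ Γ, σ.length = n}

/-- maximal length of a word in `Γ`. -/
def maxLen (Γ : Finset (List ℕ)) : ℕ := sSup {n | ∃ σ ∈ Γ, σ.length = n}

/-- `Λ_{k,r} = {σ ∈ 𝒮^* : ℰ_r(σ) < c₁^k ≤ ℰ_r(σ^♭)}`. -/
def LamSet (p : ℕ → ℕ → ℝ) (χ : ℕ → ℝ) (sr : ℕ → ℕ → ℝ) (N : ℕ) (r c1 : ℝ) (k : ℕ) :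
    Set (List ℕ) :=
  {σ | isSword p N σ ∧ Er p χ sr N r σ < c1 ^ k ∧ c1 ^ k ≤ Er p χ sr N r σ.dropLast}

/-- `ℒ(σ) = {σ, σ⁺} ∪ {σ|_h ∗ (σ_{h+1}⁺, …, σ_n⁺) : 1 ≤ h ≤ n − 1}`. -/
def Lset (N : ℕ) (σ : List ℕ) : Finset (List ℕ) :=
  (Finset.range (σ.length + 1)).image fun h =>
    σ.take h ++ (σ.drop h).map (fun x => x + N)

section AuxLemmas

variable {p sr : ℕ → ℕ → ℝ} {χ : ℕ → ℝ} {N : ℕ}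

lemma pword_nonneg (hp0 : ∀ i j, 0 ≤ p i j) :
    ∀ ρ : List ℕ, 0 ≤ pword p ρ
  | [] => by simp [pword]
  | [a] => by simp [pword]
  | a :: b :: t => by
      rw [pword]
      exact mul_nonneg (hp0 a b) (pword_nonneg hp0 (b :: t))

lemma pword_pos : ∀ ρ : List ℕ, ρ.Chain' (edge p) → 0 < pword p ρ
  | [], _ => by simp [pword]
  | [a], _ => by simp [pword]
  | a :: b :: t, h => by
      simp only [List.Chain', List.isChain_cons_cons] at h
      rw [pword]
      exact mul_pos h.1 (pword_pos (b :: t) h.2)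

lemma mem_lifts_cons {i : ℕ} {t ρ : List ℕ} :
    ρ ∈ lifts N (i :: t) ↔ ∃ l ∈ lifts N t, ρ = i :: l ∨ ρ = (i + N) :: l := by
  simp [lifts, Finset.mem_biUnion]

lemma length_of_mem_lifts : ∀ {σ ρ : List ℕ}, ρ ∈ lifts N σ → ρ.length = σ.length
  | [], ρ, h => by simp [lifts] at h; simp [h]
  | i :: t, ρ, h => by
      rcases mem_lifts_cons.1 h with ⟨l, hl, rfl | rfl⟩ <;>
        simp [length_of_mem_lifts hl]

lemma ne_nil_of_mem_lifts {σ ρ : List ℕ} (h : ρ ∈ lifts N σ) (hσ : σ ≠ []) : ρ ≠ [] := by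
  intro h0
  apply hσ
  have := length_of_mem_lifts h
  rw [h0] at this
  exact List.length_eq_zero_iff.1 this.symm

lemma self_mem_lifts : ∀ σ : List ℕ, σ ∈ lifts N σ
  | [] => by simp [lifts]
  | i :: t => mem_lifts_cons.2 ⟨t, self_mem_lifts t, Or.inl rfl⟩

lemma headD_of_mem_lifts {σ ρ : List ℕ} (h : ρ ∈ lifts N σ) :
    ρ.headD 0 = σ.headD 0 ∨ ρ.headD 0 = σ.headD 0 + N := by
  cases σ with
  | nil => simp [lifts] at h; simp [h]
  | cons i t => rcases mem_lifts_cons.1 h with ⟨l, hl, rfl | rfl⟩ <;> simp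

lemma getLastD_default_irrel : ∀ {l : List ℕ}, l ≠ [] → ∀ a b : ℕ, l.getLastD a = l.getLastD b := by
  intro l hl a b
  cases l with
  | nil => exact absurd rfl hl
  | cons x m => rw [List.getLastD_cons, List.getLastD_cons]

lemma getLastD_of_mem_lifts : ∀ {σ ρ : List ℕ}, ρ ∈ lifts N σ →
    ρ.getLastD 0 = σ.getLastD 0 ∨ ρ.getLastD 0 = σ.getLastD 0 + N
  | [], ρ, h => by simp [lifts] at h; simp [h]
  | [i], ρ, h => by
      rcases mem_lifts_cons.1 h with ⟨l, hl, rfl | rfl⟩ <;>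
      · simp [lifts] at hl
        subst hl
        simp
  | i :: j :: t, ρ, h => by
      rcases mem_lifts_cons.1 h with ⟨l, hl, rfl | rfl⟩ <;>
      · have hlne : l ≠ [] := ne_nil_of_mem_lifts hl (by simp)
        have := getLastD_of_mem_lifts hl
        rw [List.getLastD_cons, List.getLastD_cons, getLastD_default_irrel hlne _ 0,
          getLastD_default_irrel (l := j :: t) (by simp) _ 0]
        exact this

lemma headD_mem : ∀ {σ : List ℕ}, σ ≠ [] → σ.headD 0 ∈ σ
  | [], h => absurd rfl h
  | a :: t, _ => by simp

lemma getLastD_mem : ∀ {σ : List ℕ}, σ ≠ [] → σ.getLastD 0 ∈ σ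
  | [], h => absurd rfl h
  | [a], _ => by simp
  | a :: b :: t, _ => by
      rw [List.getLastD_cons, getLastD_default_irrel (by simp : (b :: t : List ℕ) ≠ []) _ 0]
      exact List.mem_cons_of_mem a (getLastD_mem (by simp))

lemma lifts_append : ∀ σ τ : List ℕ,
    lifts N (σ ++ τ) = ((lifts N σ) ×ˢ (lifts N τ)).image fun ab => ab.1 ++ ab.2
  | [], τ => by
      ext ρ
      simp [lifts, Finset.mem_image, Finset.mem_product]
  | i :: t, τ => by
      ext ρ
      rw [List.cons_append]
      simp only [mem_lifts_cons, lifts_append t τ, Finset.mem_image, Finset.mem_product]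
      constructor
      · rintro ⟨l, hl, rfl | rfl⟩
        · obtain ⟨⟨a, b⟩, ⟨ha, hb⟩, rfl⟩ := hl
          exact ⟨(i :: a, b), ⟨⟨a, ha, Or.inl rfl⟩, hb⟩, rfl⟩
        · obtain ⟨⟨a, b⟩, ⟨ha, hb⟩, rfl⟩ := hl
          exact ⟨((i + N) :: a, b), ⟨⟨a, ha, Or.inr rfl⟩, hb⟩, rfl⟩
      · rintro ⟨⟨a, b⟩, ⟨ha, hb⟩, rfl⟩
        rcases ha with ⟨l, hl, rfl | rfl⟩
        · exact ⟨l ++ b, ⟨(l, b), ⟨hl, hb⟩, rfl⟩, Or.inl rfl⟩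
        · exact ⟨l ++ b, ⟨(l, b), ⟨hl, hb⟩, rfl⟩, Or.inr rfl⟩

lemma A4_all (hA4 : A4 p N) {i j : ℕ} (hi : i ∈ Finset.Icc 1 N) (hj : j ∈ Finset.Icc 1 N)
    {a b : ℕ} (ha : a = i ∨ a = i + N) (hb : b = j ∨ b = j + N) (hpos : 0 < p a b) :
    0 < p i j ∧ 0 < p i (j + N) ∧ 0 < p (i + N) j ∧ 0 < p (i + N) (j + N) := by
  rcases hA4 i hi j hj with h | h
  · exfalso
    rcases ha with rfl | rfl <;> rcases hb with rfl | rfl <;>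
      [linarith [h.1]; linarith [h.2.1]; linarith [h.2.2.1]; linarith [h.2.2.2]]
  · exact h

lemma A4_pos (hA4 : A4 p N) {i j : ℕ} (hi : i ∈ Finset.Icc 1 N) (hj : j ∈ Finset.Icc 1 N)
    {a b : ℕ} (ha : a = i ∨ a = i + N) (hb : b = j ∨ b = j + N) (hpos : 0 < p a b)
    {a' b' : ℕ} (ha' : a' = i ∨ a' = i + N) (hb' : b' = j ∨ b' = j + N) :
    0 < p a' b' := by
  obtain ⟨h1, h2, h3, h4⟩ := A4_all hA4 hi hj ha hb hpos
  rcases ha' with rfl | rfl <;> rcases hb' with rfl | rfl <;> assumption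

lemma chain_of_mem_lifts (hA4 : A4 p N) :
    ∀ σ : List ℕ, (∀ x ∈ σ, x ∈ Finset.Icc 1 N) →
      (∃ ρ₀ ∈ lifts N σ, ρ₀.Chain' (edge p)) →
      ∀ ρ ∈ lifts N σ, ρ.Chain' (edge p) := by
  intro σ
  induction σ with
  | nil =>
      intro _ _ ρ hρ
      simp [lifts] at hρ
      simp [hρ, List.Chain']
  | cons i t ih =>
      intro hmem hex ρ hρ
      cases t with
      | nil =>
          rcases mem_lifts_cons.1 hρ with ⟨l, hl, rfl | rfl⟩ <;>
          · simp [lifts] at hl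
            subst hl
            simp [List.Chain']
      | cons j t' =>
          obtain ⟨ρ₀, hρ₀, hch⟩ := hex
          rcases mem_lifts_cons.1 hρ₀ with ⟨l₀, hl₀, h₀⟩
          rcases mem_lifts_cons.1 hl₀ with ⟨m₀, hm₀, hb₀⟩
          have hi : i ∈ Finset.Icc 1 N := hmem i (by simp)
          have hj : j ∈ Finset.Icc 1 N := hmem j (by simp)
          have hchtail : l₀.Chain' (edge p) ∧
              ∃ a₀ b₀, (a₀ = i ∨ a₀ = i + N) ∧ (b₀ = j ∨ b₀ = j + N) ∧ 0 < p a₀ b₀ := by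
            rcases h₀ with rfl | rfl <;> rcases hb₀ with rfl | rfl <;>
              simp only [List.Chain', List.isChain_cons_cons] at hch <;>
              exact ⟨hch.2, _, _, by simp, by simp, hch.1⟩
          obtain ⟨hl₀ch, a₀, b₀, ha₀, hb₀', hpos₀⟩ := hchtail
          have hallt : ∀ ρ' ∈ lifts N (j :: t'), ρ'.Chain' (edge p) :=
            ih (fun x hx => hmem x (List.mem_cons_of_mem i hx)) ⟨l₀, hl₀, hl₀ch⟩
          rcases mem_lifts_cons.1 hρ with ⟨l, hl, h⟩
          rcases mem_lifts_cons.1 hl with ⟨m, hm, hb⟩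
          have hltail : l.Chain' (edge p) := hallt l hl
          rcases h with rfl | rfl <;> rcases hb with rfl | rfl <;>
            simp only [List.Chain', List.isChain_cons_cons] <;>
            exact ⟨A4_pos hA4 hi hj ha₀ hb₀' hpos₀ (by simp) (by simp), hltail⟩

lemma Gam_eq_lifts (hA4 : A4 p N) {σ : List ℕ} (hσ : isSword p N σ) :
    Gam p N σ = lifts N σ := by
  obtain ⟨⟨hne, hmem⟩, ρ₀, h0⟩ := hσ
  rw [Gam, Finset.mem_filter] at h0
  exact Finset.filter_true_of_mem
    (fun ρ hρ => chain_of_mem_lifts hA4 σ hmem ⟨ρ₀, h0.1, h0.2⟩ ρ hρ)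

lemma chain_self (hA4 : A4 p N) {σ : List ℕ} (hσ : isSword p N σ) :
    σ.Chain' (edge p) := by
  obtain ⟨⟨hne, hmem⟩, ρ₀, h0⟩ := hσ
  rw [Gam, Finset.mem_filter] at h0
  exact chain_of_mem_lifts hA4 σ hmem ⟨ρ₀, h0.1, h0.2⟩ σ (self_mem_lifts σ)

lemma pword_append : ∀ a b : List ℕ, a ≠ [] → b ≠ [] →
    pword p (a ++ b) = pword p a * p (a.getLastD 0) (b.headD 0) * pword p b
  | [], _, h, _ => absurd rfl h
  | [x], b, _, hb => by
      cases b with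
      | nil => exact absurd rfl hb
      | cons y m => simp [pword]
  | x :: y :: t, b, _, hb => by
      have h1 := pword_append (y :: t) b (by simp) hb
      show pword p (x :: ((y :: t) ++ b)) = _
      rw [List.cons_append, pword, ← List.cons_append, h1, pword]
      have hg : (x :: y :: t).getLastD 0 = (y :: t).getLastD 0 :=
        (List.getLastD_cons (a := 0) (b := x) (l := y :: t)).trans
          (getLastD_default_irrel (by simp : (y :: t : List ℕ) ≠ []) x 0)
      rw [hg]
      ring

lemma sword_append : ∀ a b : List ℕ, a ≠ [] → b ≠ [] →
    sword sr (a ++ b) = sword sr a * sr (a.getLastD 0) (b.headD 0) * sword sr b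
  | [], _, h, _ => absurd rfl h
  | [x], b, _, hb => by
      cases b with
      | nil => exact absurd rfl hb
      | cons y m => simp [sword]
  | x :: y :: t, b, _, hb => by
      have h1 := sword_append (y :: t) b (by simp) hb
      show sword sr (x :: ((y :: t) ++ b)) = _
      rw [List.cons_append, sword, ← List.cons_append, h1, sword]
      have hg : (x :: y :: t).getLastD 0 = (y :: t).getLastD 0 :=
        (List.getLastD_cons (a := 0) (b := x) (l := y :: t)).trans
          (getLastD_default_irrel (by simp : (y :: t : List ℕ) ≠ []) x 0)
      rw [hg]
      ring

lemma headD_append {a b : List ℕ} (ha : a ≠ []) : (a ++ b).headD 0 = a.headD 0 := by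
  cases a with
  | nil => exact absurd rfl ha
  | cons x t => simp

lemma sword_pos_of (hsr : ∀ x ∈ Finset.Icc 1 N, ∀ y ∈ Finset.Icc 1 N, 0 < p x y → 0 < sr x y) :
    ∀ σ : List ℕ, (∀ x ∈ σ, x ∈ Finset.Icc 1 N) → σ.Chain' (edge p) → 0 < sword sr σ
  | [], _, _ => by simp [sword]
  | [a], _, _ => by simp [sword]
  | a :: b :: t, hmem, hch => by
      simp only [List.Chain', List.isChain_cons_cons] at hch
      rw [sword]
      exact mul_pos (hsr a (hmem a (by simp)) b (hmem b (by simp)) hch.1)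
        (sword_pos_of hsr (b :: t) (fun x hx => hmem x (List.mem_cons_of_mem a hx)) hch.2)

lemma getLast?_eq_some_getLastD : ∀ {σ : List ℕ}, σ ≠ [] → σ.getLast? = some (σ.getLastD 0)
  | [], h => absurd rfl h
  | [a], _ => by simp
  | a :: b :: t, _ => by
      rw [List.getLast?_cons_cons, getLast?_eq_some_getLastD (by simp : (b :: t : List ℕ) ≠ [])]
      exact congrArg some ((getLastD_default_irrel (by simp) 0 a).trans
        (List.getLastD_cons (a := 0) (b := a) (l := b :: t)).symm)

end AuxLemmas

/-- **Lemma 5.1.** Assume (A2), (A4) and (A5). For `σ∗τ ∈ 𝒮^*` and `s > 0`: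
`(p̲ s̲^r χ̄⁻¹)^s ℰ_r(σ)^s ℰ_r(τ)^s ≤ ℰ_r(σ∗τ)^s ≤ (p̄ s̄^r χ̲⁻¹)^s ℰ_r(σ)^s ℰ_r(τ)^s`. -/
theorem stmt17
    (N q : ℕ) (hN : 2 ≤ N) (hq : 1 ≤ q) (r : ℝ) (hr : 0 < r)
    (p : ℕ → ℕ → ℝ) (χ : ℕ → ℝ)
    (hp0 : ∀ i j, 0 ≤ p i j)
    (hpsupp : ∀ i j, 0 < p i j → i ∈ Finset.Icc 1 (2 * N) ∧ j ∈ Finset.Icc 1 (2 * N))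
    (hpsum : ∀ i ∈ Finset.Icc 1 (2 * N), ∑ j ∈ Finset.Icc 1 (2 * N), p i j = 1)
    (hχpos : ∀ i ∈ Finset.Icc 1 (2 * N), 0 < χ i)
    (hχsum : ∑ i ∈ Finset.Icc 1 (2 * N), χ i = 1)
    (sr : ℕ → ℕ → ℝ)
    (T : ℕ → ℕ → EuclideanSpace ℝ (Fin q) → EuclideanSpace ℝ (Fin q))
    (J : ℕ → Set (EuclideanSpace ℝ (Fin q)))
    (hTinv : ∀ i ∈ Finset.Icc 1 N, ∀ j ∈ Finset.Icc 1 N, ∀ a b : ℕ,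
      (a = i ∨ a = i + N) → (b = j ∨ b = j + N) → 0 < p a b →
      T a b = T i j ∧ sr a b = sr i j)
    (hsim : ∀ i ∈ Finset.Icc 1 N, ∀ j ∈ Finset.Icc 1 N, isSword p N [i, j] →
      0 < sr i j ∧ sr i j < 1 ∧ ∀ x y, dist (T i j x) (T i j y) = sr i j * dist x y)
    (hJcpt : ∀ i ∈ Finset.Icc 1 N,
      IsCompact (J i) ∧ (J i).Nonempty ∧ closure (interior (J i)) = J i ∧
        Metric.diam (J i) = 1)
    (hJdisj : ∀ i ∈ Finset.Icc 1 N, ∀ j ∈ Finset.Icc 1 N, i ≠ j → Disjoint (J i) (J j))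
    (hJplus : ∀ i ∈ Finset.Icc 1 N, J (i + N) = J i)
    (hnest : ∀ i ∈ Finset.Icc 1 N, ∀ j ∈ Finset.Icc 1 N, isSword p N [i, j] →
      T i j '' J j ⊆ J i)
    (hTdisj : ∀ i ∈ Finset.Icc 1 N, ∀ j ∈ Finset.Icc 1 N, ∀ l ∈ Finset.Icc 1 N,
      isSword p N [i, j] → isSword p N [i, l] → j ≠ l →
      Disjoint (T i j '' J j) (T i l '' J l))
    (hA2 : A2 p N) (hA4 : A4 p N) (hA5 : A5 p N)
    (σ τ : List ℕ) (hσ : isSword p N σ) (hτ : isSword p N τ)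
    (hστ : isSword p N (σ ++ τ)) (s : ℝ) (hs : 0 < s) :
    (pMin p N * sMin p sr N ^ r * (chiMax χ N)⁻¹) ^ s *
          Er p χ sr N r σ ^ s * Er p χ sr N r τ ^ s ≤
        Er p χ sr N r (σ ++ τ) ^ s ∧
      Er p χ sr N r (σ ++ τ) ^ s ≤
        (pMax p N * sMax p sr N ^ r * (chiMin χ N)⁻¹) ^ s *
          Er p χ sr N r σ ^ s * Er p χ sr N r τ ^ s := by
  classical
  have hσne : σ ≠ [] := hσ.1.1
  have hτne : τ ≠ [] := hτ.1.1
  have hστne : σ ++ τ ≠ [] := by simp [hσne]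
  have hσmem : ∀ x ∈ σ, x ∈ Finset.Icc 1 N := hσ.1.2
  have hτmem : ∀ x ∈ τ, x ∈ Finset.Icc 1 N := hτ.1.2
  have hx₀Icc : σ.getLastD 0 ∈ Finset.Icc 1 N := hσmem _ (getLastD_mem hσne)
  have hy₀Icc : τ.headD 0 ∈ Finset.Icc 1 N := hτmem _ (headD_mem hτne)
  have hchστ : (σ ++ τ).Chain' (edge p) := chain_self hA4 hστ
  have hchσ : σ.Chain' (edge p) := chain_self hA4 hσ
  have hchτ : τ.Chain' (edge p) := chain_self hA4 hτ
  have hheadτ : τ.head? = some (τ.headD 0) := by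
    cases τ with
    | nil => exact absurd rfl hτne
    | cons a t => rfl
  have hjoin : 0 < p (σ.getLastD 0) (τ.headD 0) := by
    simp only [List.Chain', List.isChain_append] at hchστ
    exact hchστ.2.2 _ (getLast?_eq_some_getLastD hσne) _ hheadτ
  have hIccUp : ∀ x ∈ Finset.Icc 1 N, x ∈ Finset.Icc 1 (2 * N) ∧
      x + N ∈ Finset.Icc 1 (2 * N) := by
    intro x hx
    simp only [Finset.mem_Icc] at hx ⊢
    omega
  -- the pair [x,y] is an 𝒮-word whenever p x y > 0
  have hpair : ∀ x ∈ Finset.Icc 1 N, ∀ y ∈ Finset.Icc 1 N, 0 < p x y →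
      isSword p N [x, y] := by
    intro x hx y hy hpxy
    refine ⟨⟨by simp, ?_⟩, ⟨[x, y], ?_⟩⟩
    · intro z hz
      simp only [List.mem_cons, List.mem_singleton, List.not_mem_nil, or_false] at hz
      rcases hz with rfl | rfl <;> assumption
    · rw [Gam, Finset.mem_filter]
      exact ⟨self_mem_lifts _, by simp [List.Chain', List.isChain_cons_cons, edge, hpxy]⟩
  have hsrpos : ∀ x ∈ Finset.Icc 1 N, ∀ y ∈ Finset.Icc 1 N, 0 < p x y → 0 < sr x y :=
    fun x hx y hy h => (hsim x hx y hy (hpair x hx y hy h)).1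
  have hswσ : 0 < sword sr σ := sword_pos_of hsrpos σ hσmem hchσ
  have hswτ : 0 < sword sr τ := sword_pos_of hsrpos τ hτmem hchτ
  -- constants: p̲, p̄
  set pSet : Set ℝ :=
    {x | ∃ i ∈ Finset.Icc 1 (2 * N), ∃ j ∈ Finset.Icc 1 (2 * N), 0 < p i j ∧ x = p i j}
    with hpSetDef
  have hpMinDef : pMin p N = sInf pSet := rfl
  have hpMaxDef : pMax p N = sSup pSet := rfl
  have hpfin : pSet.Finite := by
    apply Set.Finite.subset
      (((Finset.Icc 1 (2 * N) ×ˢ Finset.Icc 1 (2 * N)).image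
        fun ij : ℕ × ℕ => p ij.1 ij.2) : Finset ℝ).finite_toSet
    rintro x ⟨i, hi, j, hj, hpij, rfl⟩
    simp only [Finset.coe_image, Set.mem_image, Finset.mem_coe, Finset.mem_product]
    exact ⟨(i, j), ⟨hi, hj⟩, rfl⟩
  have hpne : pSet.Nonempty :=
    ⟨p (σ.getLastD 0) (τ.headD 0), _, (hIccUp _ hx₀Icc).1, _, (hIccUp _ hy₀Icc).1, hjoin, rfl⟩
  have hpMin_pos : 0 < pMin p N := by
    rw [hpMinDef]
    obtain ⟨i, _, j, _, hpij, hEq⟩ := hpne.csInf_mem hpfin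
    rw [hEq]
    exact hpij
  have hpMin_le : ∀ a b : ℕ, a ∈ Finset.Icc 1 (2 * N) → b ∈ Finset.Icc 1 (2 * N) →
      0 < p a b → pMin p N ≤ p a b := by
    intro a b ha hb h
    rw [hpMinDef]
    exact csInf_le hpfin.bddBelow ⟨a, ha, b, hb, h, rfl⟩
  have hle_pMax : ∀ a b : ℕ, a ∈ Finset.Icc 1 (2 * N) → b ∈ Finset.Icc 1 (2 * N) →
      0 < p a b → p a b ≤ pMax p N := by
    intro a b ha hb h
    rw [hpMaxDef]
    exact le_csSup hpfin.bddAbove ⟨a, ha, b, hb, h, rfl⟩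
  -- constants: χ̲, χ̄
  set chiSet : Set ℝ := {x | ∃ i ∈ Finset.Icc 1 (2 * N), x = χ i} with hchiSetDef
  have hchiMinDef : chiMin χ N = sInf chiSet := rfl
  have hchiMaxDef : chiMax χ N = sSup chiSet := rfl
  have hchifin : chiSet.Finite := by
    apply Set.Finite.subset (((Finset.Icc 1 (2 * N)).image χ) : Finset ℝ).finite_toSet
    rintro x ⟨i, hi, rfl⟩
    simp only [Finset.coe_image, Set.mem_image, Finset.mem_coe]
    exact ⟨i, hi, rfl⟩
  have hchine : chiSet.Nonempty := ⟨χ 1, 1, by simp [Finset.mem_Icc]; omega, rfl⟩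
  have hchiMin_pos : 0 < chiMin χ N := by
    rw [hchiMinDef]
    obtain ⟨i, hi, hEq⟩ := hchine.csInf_mem hchifin
    rw [hEq]
    exact hχpos i hi
  have hchiMax_pos : 0 < chiMax χ N := by
    rw [hchiMaxDef]
    obtain ⟨i, hi, hEq⟩ := hchine.csSup_mem hchifin
    rw [hEq]
    exact hχpos i hi
  have hchiMin_le : ∀ i ∈ Finset.Icc 1 (2 * N), chiMin χ N ≤ χ i := by
    intro i hi
    rw [hchiMinDef]
    exact csInf_le hchifin.bddBelow ⟨i, hi, rfl⟩
  have hle_chiMax : ∀ i ∈ Finset.Icc 1 (2 * N), χ i ≤ chiMax χ N := by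
    intro i hi
    rw [hchiMaxDef]
    exact le_csSup hchifin.bddAbove ⟨i, hi, rfl⟩
  -- constants: s̲, s̄
  set sSet : Set ℝ :=
    {x | ∃ i ∈ Finset.Icc 1 N, ∃ j ∈ Finset.Icc 1 N, isSword p N [i, j] ∧ x = sr i j}
    with hsSetDef
  have hsMinDef : sMin p sr N = sInf sSet := rfl
  have hsMaxDef : sMax p sr N = sSup sSet := rfl
  have hsfin : sSet.Finite := by
    apply Set.Finite.subset
      (((Finset.Icc 1 N ×ˢ Finset.Icc 1 N).image
        fun ij : ℕ × ℕ => sr ij.1 ij.2) : Finset ℝ).finite_toSet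
    rintro x ⟨i, hi, j, hj, _, rfl⟩
    simp only [Finset.coe_image, Set.mem_image, Finset.mem_coe, Finset.mem_product]
    exact ⟨(i, j), ⟨hi, hj⟩, rfl⟩
  have hsne : sSet.Nonempty :=
    ⟨sr (σ.getLastD 0) (τ.headD 0), _, hx₀Icc, _, hy₀Icc,
      hpair _ hx₀Icc _ hy₀Icc hjoin, rfl⟩
  have hsMin_pos : 0 < sMin p sr N := by
    rw [hsMinDef]
    obtain ⟨i, hi, j, hj, hw, hEq⟩ := hsne.csInf_mem hsfin
    rw [hEq]
    exact (hsim i hi j hj hw).1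
  have hsMin_le_e : sMin p sr N ≤ sr (σ.getLastD 0) (τ.headD 0) := by
    rw [hsMinDef]
    exact csInf_le hsfin.bddBelow
      ⟨_, hx₀Icc, _, hy₀Icc, hpair _ hx₀Icc _ hy₀Icc hjoin, rfl⟩
  have he_le_sMax : sr (σ.getLastD 0) (τ.headD 0) ≤ sMax p sr N := by
    rw [hsMaxDef]
    exact le_csSup hsfin.bddAbove
      ⟨_, hx₀Icc, _, hy₀Icc, hpair _ hx₀Icc _ hy₀Icc hjoin, rfl⟩
  have hepos : 0 < sr (σ.getLastD 0) (τ.headD 0) := hsrpos _ hx₀Icc _ hy₀Icc hjoin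
  -- decomposition of μ(J_{σ∗τ})
  have hGσ : Gam p N σ = lifts N σ := Gam_eq_lifts hA4 hσ
  have hGτ : Gam p N τ = lifts N τ := Gam_eq_lifts hA4 hτ
  have hGστ : Gam p N (σ ++ τ) = lifts N (σ ++ τ) := Gam_eq_lifts hA4 hστ
  have hinj : ∀ x ∈ (lifts N σ) ×ˢ (lifts N τ), ∀ y ∈ (lifts N σ) ×ˢ (lifts N τ),
      (fun ab : List ℕ × List ℕ => ab.1 ++ ab.2) x =
        (fun ab : List ℕ × List ℕ => ab.1 ++ ab.2) y → x = y := by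
    rintro ⟨a₁, b₁⟩ h₁ ⟨a₂, b₂⟩ h₂ h
    simp only [Finset.mem_product] at h₁ h₂
    have hlen : a₁.length = a₂.length := by
      rw [length_of_mem_lifts h₁.1, length_of_mem_lifts h₂.1]
    obtain ⟨h3, h4⟩ := List.append_inj h hlen
    simp only [Prod.mk.injEq]
    exact ⟨h3, h4⟩
  have hmuJστ : muJ p χ N (σ ++ τ) =
      ∑ a ∈ lifts N σ, ∑ b ∈ lifts N τ,
        χ (a.headD 0) * (pword p a * p (a.getLastD 0) (b.headD 0) * pword p b) := by
    rw [muJ, hGστ, lifts_append, Finset.sum_image hinj, Finset.sum_product]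
    refine Finset.sum_congr rfl fun a ha => Finset.sum_congr rfl fun b hb => ?_
    rw [headD_append (ne_nil_of_mem_lifts ha hσne),
      pword_append a b (ne_nil_of_mem_lifts ha hσne) (ne_nil_of_mem_lifts hb hτne)]
  have hmuJσ : muJ p χ N σ = ∑ a ∈ lifts N σ, χ (a.headD 0) * pword p a := by
    rw [muJ, hGσ]
  have hmuJτ : muJ p χ N τ = ∑ b ∈ lifts N τ, χ (b.headD 0) * pword p b := by
    rw [muJ, hGτ]
  -- per-lift facts
  have hliftσ : ∀ a ∈ lifts N σ, 0 < χ (a.headD 0) ∧ 0 < pword p a ∧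
      a.headD 0 ∈ Finset.Icc 1 (2 * N) := by
    intro a ha
    have hch : a.Chain' (edge p) :=
      chain_of_mem_lifts hA4 σ hσmem ⟨σ, self_mem_lifts σ, hchσ⟩ a ha
    have hhd : a.headD 0 ∈ Finset.Icc 1 (2 * N) := by
      have h0 : σ.headD 0 ∈ Finset.Icc 1 N := hσmem _ (headD_mem hσne)
      rcases headD_of_mem_lifts ha with h | h <;> rw [h]
      exacts [(hIccUp _ h0).1, (hIccUp _ h0).2]
    exact ⟨hχpos _ hhd, pword_pos a hch, hhd⟩
  have hliftτ : ∀ b ∈ lifts N τ, 0 < χ (b.headD 0) ∧ 0 < pword p b ∧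
      b.headD 0 ∈ Finset.Icc 1 (2 * N) := by
    intro b hb
    have hch : b.Chain' (edge p) :=
      chain_of_mem_lifts hA4 τ hτmem ⟨τ, self_mem_lifts τ, hchτ⟩ b hb
    have hhd : b.headD 0 ∈ Finset.Icc 1 (2 * N) := by
      have h0 : τ.headD 0 ∈ Finset.Icc 1 N := hτmem _ (headD_mem hτne)
      rcases headD_of_mem_lifts hb with h | h <;> rw [h]
      exacts [(hIccUp _ h0).1, (hIccUp _ h0).2]
    exact ⟨hχpos _ hhd, pword_pos b hch, hhd⟩
  have hedge : ∀ a ∈ lifts N σ, ∀ b ∈ lifts N τ,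
      0 < p (a.getLastD 0) (b.headD 0) ∧
        pMin p N ≤ p (a.getLastD 0) (b.headD 0) ∧
          p (a.getLastD 0) (b.headD 0) ≤ pMax p N := by
    intro a ha b hb
    have hpos : 0 < p (a.getLastD 0) (b.headD 0) :=
      A4_pos hA4 hx₀Icc hy₀Icc (Or.inl rfl) (Or.inl rfl) hjoin
        (getLastD_of_mem_lifts ha) (headD_of_mem_lifts hb)
    obtain ⟨hia, hib⟩ := hpsupp _ _ hpos
    exact ⟨hpos, hpMin_le _ _ hia hib hpos, hle_pMax _ _ hia hib hpos⟩
  have hmuσ_pos : 0 < muJ p χ N σ := by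
    rw [hmuJσ]
    exact Finset.sum_pos
      (fun a ha => mul_pos (hliftσ a ha).1 (hliftσ a ha).2.1) ⟨σ, self_mem_lifts σ⟩
  have hmuτ_pos : 0 < muJ p χ N τ := by
    rw [hmuJτ]
    exact Finset.sum_pos
      (fun b hb => mul_pos (hliftτ b hb).1 (hliftτ b hb).2.1) ⟨τ, self_mem_lifts τ⟩
  -- the two key sum bounds
  have hlow : pMin p N * (chiMax χ N)⁻¹ * (muJ p χ N σ * muJ p χ N τ) ≤
      muJ p χ N (σ ++ τ) := by
    rw [hmuJστ, hmuJσ, hmuJτ, Finset.sum_mul_sum, Finset.mul_sum]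
    refine Finset.sum_le_sum fun a ha => ?_
    rw [Finset.mul_sum]
    refine Finset.sum_le_sum fun b hb => ?_
    have key : pMin p N * (chiMax χ N)⁻¹ * χ (b.headD 0) ≤
        p (a.getLastD 0) (b.headD 0) := by
      calc pMin p N * (chiMax χ N)⁻¹ * χ (b.headD 0)
          ≤ pMin p N * (chiMax χ N)⁻¹ * chiMax χ N :=
            mul_le_mul_of_nonneg_left (hle_chiMax _ (hliftτ b hb).2.2)
              (mul_nonneg hpMin_pos.le (inv_nonneg.2 hchiMax_pos.le))
        _ = pMin p N := by
            rw [mul_assoc, inv_mul_cancel₀ hchiMax_pos.ne', mul_one]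
        _ ≤ p (a.getLastD 0) (b.headD 0) := (hedge a ha b hb).2.1
    calc pMin p N * (chiMax χ N)⁻¹ * (χ (a.headD 0) * pword p a * (χ (b.headD 0) * pword p b))
        = (pMin p N * (chiMax χ N)⁻¹ * χ (b.headD 0)) *
            (χ (a.headD 0) * pword p a * pword p b) := by ring
      _ ≤ p (a.getLastD 0) (b.headD 0) * (χ (a.headD 0) * pword p a * pword p b) :=
          mul_le_mul_of_nonneg_right key
            (mul_nonneg (mul_nonneg (hliftσ a ha).1.le (hliftσ a ha).2.1.le)
              (hliftτ b hb).2.1.le)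
      _ = χ (a.headD 0) * (pword p a * p (a.getLastD 0) (b.headD 0) * pword p b) := by ring
  have hup : muJ p χ N (σ ++ τ) ≤
      pMax p N * (chiMin χ N)⁻¹ * (muJ p χ N σ * muJ p χ N τ) := by
    rw [hmuJστ, hmuJσ, hmuJτ, Finset.sum_mul_sum, Finset.mul_sum]
    refine Finset.sum_le_sum fun a ha => ?_
    rw [Finset.mul_sum]
    refine Finset.sum_le_sum fun b hb => ?_
    have key : p (a.getLastD 0) (b.headD 0) ≤
        pMax p N * (chiMin χ N)⁻¹ * χ (b.headD 0) := by
      calc p (a.getLastD 0) (b.headD 0) ≤ pMax p N := (hedge a ha b hb).2.2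
        _ = pMax p N * (chiMin χ N)⁻¹ * chiMin χ N := by
            rw [mul_assoc, inv_mul_cancel₀ hchiMin_pos.ne', mul_one]
        _ ≤ pMax p N * (chiMin χ N)⁻¹ * χ (b.headD 0) :=
            mul_le_mul_of_nonneg_left (hchiMin_le _ (hliftτ b hb).2.2)
              (mul_nonneg (le_trans hpMin_pos.le (by
                have := hedge a ha b hb
                linarith [this.2.1, this.2.2]))
                (inv_nonneg.2 hchiMin_pos.le))
    calc χ (a.headD 0) * (pword p a * p (a.getLastD 0) (b.headD 0) * pword p b)
        = p (a.getLastD 0) (b.headD 0) * (χ (a.headD 0) * pword p a * pword p b) := by ring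
      _ ≤ (pMax p N * (chiMin χ N)⁻¹ * χ (b.headD 0)) *
            (χ (a.headD 0) * pword p a * pword p b) :=
          mul_le_mul_of_nonneg_right key
            (mul_nonneg (mul_nonneg (hliftσ a ha).1.le (hliftσ a ha).2.1.le)
              (hliftτ b hb).2.1.le)
      _ = pMax p N * (chiMin χ N)⁻¹ *
            (χ (a.headD 0) * pword p a * (χ (b.headD 0) * pword p b)) := by ring
  -- Er expansions
  have hEσ : Er p χ sr N r σ = muJ p χ N σ * sword sr σ ^ r := by
    simp only [Er, if_neg hσne]
  have hEτ : Er p χ sr N r τ = muJ p χ N τ * sword sr τ ^ r := by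
    simp only [Er, if_neg hτne]
  have hswστ : sword sr (σ ++ τ) =
      sword sr σ * sr (σ.getLastD 0) (τ.headD 0) * sword sr τ := sword_append σ τ hσne hτne
  have hEστ : Er p χ sr N r (σ ++ τ) = muJ p χ N (σ ++ τ) *
      (sword sr σ ^ r * sr (σ.getLastD 0) (τ.headD 0) ^ r * sword sr τ ^ r) := by
    simp only [Er, if_neg hστne]
    rw [hswστ, Real.mul_rpow (mul_nonneg hswσ.le hepos.le) hswτ.le,
      Real.mul_rpow hswσ.le hepos.le]
  have hmuστ_nonneg : (0 : ℝ) ≤ muJ p χ N (σ ++ τ) :=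
    le_trans (mul_nonneg (mul_nonneg hpMin_pos.le (inv_nonneg.2 hchiMax_pos.le))
      (mul_nonneg hmuσ_pos.le hmuτ_pos.le)) hlow
  have hEσ_pos : 0 < Er p χ sr N r σ := by
    rw [hEσ]
    exact mul_pos hmuσ_pos (Real.rpow_pos_of_pos hswσ r)
  have hEτ_pos : 0 < Er p χ sr N r τ := by
    rw [hEτ]
    exact mul_pos hmuτ_pos (Real.rpow_pos_of_pos hswτ r)
  -- the pre-power inequalities
  have hmain_low : pMin p N * sMin p sr N ^ r * (chiMax χ N)⁻¹ *
      (Er p χ sr N r σ * Er p χ sr N r τ) ≤ Er p χ sr N r (σ ++ τ) := by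
    rw [hEσ, hEτ, hEστ]
    have h1 : sMin p sr N ^ r ≤ sr (σ.getLastD 0) (τ.headD 0) ^ r :=
      Real.rpow_le_rpow hsMin_pos.le hsMin_le_e hr.le
    calc pMin p N * sMin p sr N ^ r * (chiMax χ N)⁻¹ *
          (muJ p χ N σ * sword sr σ ^ r * (muJ p χ N τ * sword sr τ ^ r))
        = (pMin p N * (chiMax χ N)⁻¹ * (muJ p χ N σ * muJ p χ N τ) * sMin p sr N ^ r) *
            (sword sr σ ^ r * sword sr τ ^ r) := by ring
      _ ≤ (muJ p χ N (σ ++ τ) * sr (σ.getLastD 0) (τ.headD 0) ^ r) *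
            (sword sr σ ^ r * sword sr τ ^ r) := by
          refine mul_le_mul_of_nonneg_right ?_
            (mul_nonneg (Real.rpow_nonneg hswσ.le r) (Real.rpow_nonneg hswτ.le r))
          exact mul_le_mul hlow h1 (Real.rpow_nonneg hsMin_pos.le r) hmuστ_nonneg
      _ = muJ p χ N (σ ++ τ) *
            (sword sr σ ^ r * sr (σ.getLastD 0) (τ.headD 0) ^ r * sword sr τ ^ r) := by ring
  have hmain_up : Er p χ sr N r (σ ++ τ) ≤ pMax p N * sMax p sr N ^ r * (chiMin χ N)⁻¹ *
      (Er p χ sr N r σ * Er p χ sr N r τ) := by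
    rw [hEσ, hEτ, hEστ]
    have h1 : sr (σ.getLastD 0) (τ.headD 0) ^ r ≤ sMax p sr N ^ r :=
      Real.rpow_le_rpow hepos.le he_le_sMax hr.le
    calc muJ p χ N (σ ++ τ) *
          (sword sr σ ^ r * sr (σ.getLastD 0) (τ.headD 0) ^ r * sword sr τ ^ r)
        = (muJ p χ N (σ ++ τ) * sr (σ.getLastD 0) (τ.headD 0) ^ r) *
            (sword sr σ ^ r * sword sr τ ^ r) := by ring
      _ ≤ (pMax p N * (chiMin χ N)⁻¹ * (muJ p χ N σ * muJ p χ N τ) * sMax p sr N ^ r) *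
            (sword sr σ ^ r * sword sr τ ^ r) := by
          refine mul_le_mul_of_nonneg_right ?_
            (mul_nonneg (Real.rpow_nonneg hswσ.le r) (Real.rpow_nonneg hswτ.le r))
          exact mul_le_mul hup h1 (Real.rpow_nonneg hepos.le r)
            (mul_nonneg (mul_nonneg (le_trans hpMin_pos.le (by
              linarith [(hedge σ (self_mem_lifts σ) τ (self_mem_lifts τ)).2.1,
                (hedge σ (self_mem_lifts σ) τ (self_mem_lifts τ)).2.2]))
              (inv_nonneg.2 hchiMin_pos.le)) (mul_nonneg hmuσ_pos.le hmuτ_pos.le))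
      _ = pMax p N * sMax p sr N ^ r * (chiMin χ N)⁻¹ *
            (muJ p χ N σ * sword sr σ ^ r * (muJ p χ N τ * sword sr τ ^ r)) := by ring
  -- raise to power s
  have hEστ_nonneg : (0 : ℝ) ≤ Er p χ sr N r (σ ++ τ) :=
    le_trans (mul_nonneg (mul_nonneg (mul_nonneg hpMin_pos.le
      (Real.rpow_nonneg hsMin_pos.le r)) (inv_nonneg.2 hchiMax_pos.le))
      (mul_nonneg hEσ_pos.le hEτ_pos.le)) hmain_low
  have hCl_nonneg : (0 : ℝ) ≤ pMin p N * sMin p sr N ^ r * (chiMax χ N)⁻¹ :=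
    mul_nonneg (mul_nonneg hpMin_pos.le (Real.rpow_nonneg hsMin_pos.le r))
      (inv_nonneg.2 hchiMax_pos.le)
  have hCu_nonneg : (0 : ℝ) ≤ pMax p N * sMax p sr N ^ r * (chiMin χ N)⁻¹ := by
    have h2 : 0 < pMax p N := lt_of_lt_of_le hpMin_pos (by
      linarith [(hedge σ (self_mem_lifts σ) τ (self_mem_lifts τ)).2.1,
        (hedge σ (self_mem_lifts σ) τ (self_mem_lifts τ)).2.2])
    have h3 : 0 < sMax p sr N := lt_of_lt_of_le hepos he_le_sMax
    exact mul_nonneg (mul_nonneg h2.le (Real.rpow_nonneg h3.le r))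
      (inv_nonneg.2 hchiMin_pos.le)
  constructor
  · have heq : (pMin p N * sMin p sr N ^ r * (chiMax χ N)⁻¹) ^ s *
        Er p χ sr N r σ ^ s * Er p χ sr N r τ ^ s =
        (pMin p N * sMin p sr N ^ r * (chiMax χ N)⁻¹ *
          (Er p χ sr N r σ * Er p χ sr N r τ)) ^ s := by
      rw [Real.mul_rpow hCl_nonneg (mul_nonneg hEσ_pos.le hEτ_pos.le),
        Real.mul_rpow hEσ_pos.le hEτ_pos.le]
      ring
    rw [heq]
    exact Real.rpow_le_rpow
      (mul_nonneg hCl_nonneg (mul_nonneg hEσ_pos.le hEτ_pos.le)) hmain_low hs.le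
  · have heq : (pMax p N * sMax p sr N ^ r * (chiMin χ N)⁻¹) ^ s *
        Er p χ sr N r σ ^ s * Er p χ sr N r τ ^ s =
        (pMax p N * sMax p sr N ^ r * (chiMin χ N)⁻¹ *
          (Er p χ sr N r σ * Er p χ sr N r τ)) ^ s := by
      rw [Real.mul_rpow hCu_nonneg (mul_nonneg hEσ_pos.le hEτ_pos.le),
        Real.mul_rpow hEσ_pos.le hEτ_pos.le]
      ring
    rw [heq]
    exact Real.rpow_le_rpow hEστ_nonneg hmain_up hs.le

end MTM

end
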